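/- (Negative dependence / Fischer's inequality) Let K be an n×n real symmetric positive semidefinite matrix and let S₁, S₂ ⊆ {1,…,n} be disjoint subsets. Then det(K_{S₁∪S₂}) ≤ det(K_{S₁}) · det(K_{S₂}). Consequently, for a DPP with marginal kernel K, the joint inclusion probability satisfies P(S₁ ∪ S₂ ⊆ Y) ≤ P(S₁ ⊆ Y) · P(S₂ ⊆ Y). -/

import Mathlib

open Matrix BigOperators

/-- The principal submatrix of `M` indexed by the subset `S`. -/
def principalSubmatrix {n : ℕ} (M : Matrix (Fin n) (Fin n) ℝ) (S : Finset (Fin n)) :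
    Matrix {i // i ∈ S} {i // i ∈ S} ℝ :=
  M.submatrix (fun i => (i : Fin n)) (fun i => (i : Fin n))

section Aux

variable {m : Type*} [Fintype m] [DecidableEq m]

lemma psd_det_nonneg {X : Matrix m m ℝ} (hX : X.PosSemidef) : 0 ≤ X.det := by
  rw [hX.1.det_eq_prod_eigenvalues]
  exact Finset.prod_nonneg fun i _ => by exact_mod_cast hX.eigenvalues_nonneg i

lemma psd_posDef_of_det_ne_zero {X : Matrix m m ℝ} (hX : X.PosSemidef) (hd : X.det ≠ 0) :
    X.PosDef := by
  refine PosDef.of_dotProduct_mulVec_pos hX.1 fun x hx => ?_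
  rcases lt_or_eq_of_le (hX.dotProduct_mulVec_nonneg x) with h | h
  · exact h
  · exfalso
    have h0 : X *ᵥ x = 0 := (hX.dotProduct_mulVec_zero_iff x).1 h.symm
    exact hd ((Matrix.exists_mulVec_eq_zero_iff).1 ⟨x, hx, h0⟩)

lemma one_le_det_one_add {Z : Matrix m m ℝ} (hZ : Z.PosSemidef) : 1 ≤ (1 + Z).det := by
  have hH := hZ.1
  have hUU : (hH.eigenvectorUnitary : Matrix m m ℝ) *
      star (hH.eigenvectorUnitary : Matrix m m ℝ) = 1 :=
    (Matrix.mem_unitaryGroup_iff).mp hH.eigenvectorUnitary.2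
  have key : 1 + Z = (hH.eigenvectorUnitary : Matrix m m ℝ) *
      (1 + diagonal (RCLike.ofReal ∘ hH.eigenvalues)) *
      star (hH.eigenvectorUnitary : Matrix m m ℝ) := by
    rw [mul_add, add_mul, mul_one, hUU]
    congr 1
    exact hH.spectral_theorem
  rw [key, det_mul, det_mul, mul_right_comm, ← det_mul, hUU, det_one, one_mul]
  have : (1 : Matrix m m ℝ) + diagonal (RCLike.ofReal ∘ hH.eigenvalues) =
      diagonal (fun i => 1 + hH.eigenvalues i) := by
    rw [← diagonal_one, diagonal_add]
    rfl
  rw [this, det_diagonal]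
  have hp := Finset.prod_le_prod (s := Finset.univ) (f := fun _ : m => (1 : ℝ))
    (g := fun i => 1 + hH.eigenvalues i) (fun i _ => zero_le_one)
    (fun i _ => by have h0 : 0 ≤ hH.eigenvalues i := hZ.eigenvalues_nonneg i; show (1:ℝ) ≤ 1 + hH.eigenvalues i; linarith)
  simpa using hp

open scoped MatrixOrder in
lemma det_le_det_add {X Y : Matrix m m ℝ} (hX : X.PosSemidef) (hY : Y.PosSemidef) :
    X.det ≤ (X + Y).det := by
  by_cases hd : X.det = 0
  · rw [hd]
    exact psd_det_nonneg (hX.add hY)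
  · set S := CFC.sqrt X with hSdef
    have hS : S.PosSemidef := (CFC.sqrt_nonneg X).posSemidef
    have hSS : S * S = X := CFC.sqrt_mul_sqrt_self X hX.nonneg
    have hdS : S.det ≠ 0 := fun h => hd (by rw [← hSS, det_mul, h, mul_zero])
    have hSinvD : S⁻¹.PosDef := (psd_posDef_of_det_ne_zero hS hdS).inv
    have hW : (S⁻¹ * Y * S⁻¹).PosSemidef := by
      have h' := hY.mul_mul_conjTranspose_same S⁻¹
      rwa [hSinvD.isHermitian.eq] at h'
    have hinv : S * S⁻¹ = 1 := mul_nonsing_inv _ (isUnit_iff_ne_zero.2 hdS)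
    have hinv' : S⁻¹ * S = 1 := nonsing_inv_mul _ (isUnit_iff_ne_zero.2 hdS)
    have key : X + Y = S * (1 + S⁻¹ * Y * S⁻¹) * S := by
      rw [mul_add, add_mul, mul_one, hSS]
      congr 1
      symm
      calc S * (S⁻¹ * Y * S⁻¹) * S = (S * S⁻¹) * Y * (S⁻¹ * S) := by
            simp only [Matrix.mul_assoc]
          _ = Y := by rw [hinv, hinv', Matrix.one_mul, Matrix.mul_one]
    rw [key, det_mul, det_mul, mul_comm, ← mul_assoc, ← det_mul, hSS]
    calc X.det = X.det * 1 := (mul_one _).symm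
      _ ≤ X.det * (1 + S⁻¹ * Y * S⁻¹).det :=
        mul_le_mul_of_nonneg_left (one_le_det_one_add hW) (psd_det_nonneg hX)

lemma fischer_blocks {p : Type*} [Fintype p] [DecidableEq p]
    {A : Matrix m m ℝ} {B : Matrix m p ℝ} {D : Matrix p p ℝ}
    (hM : (fromBlocks A B Bᴴ D).PosSemidef) :
    (fromBlocks A B Bᴴ D).det ≤ A.det * D.det := by
  have hA : A.PosSemidef := by
    have h := hM.submatrix (Sum.inl : m → m ⊕ p)
    exact h
  have hD : D.PosSemidef := by
    have h := hM.submatrix (Sum.inr : p → m ⊕ p)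
    exact h
  by_cases hdA : A.det = 0
  · obtain ⟨x, hx, hx0⟩ := (Matrix.exists_mulVec_eq_zero_iff).2 hdA
    have hz : (fromBlocks A B Bᴴ D).det = 0 := by
      apply (Matrix.exists_mulVec_eq_zero_iff).1
      refine ⟨Sum.elim x 0, ?_, ?_⟩
      · intro h
        apply hx
        funext i
        exact congrFun h (Sum.inl i)
      · apply (hM.dotProduct_mulVec_zero_iff _).1
        rw [fromBlocks_mulVec]
        simp [hx0, dotProduct]
    rw [hz, hdA, zero_mul]
  · have hAd : A.PosDef := psd_posDef_of_det_ne_zero hA hdA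
    haveI : Invertible A := invertibleOfIsUnitDet A (isUnit_iff_ne_zero.2 hdA)
    rw [det_fromBlocks₁₁, invOf_eq_nonsing_inv]
    have hschur : (D - Bᴴ * A⁻¹ * B).PosSemidef := (PosDef.fromBlocks₁₁ B D hAd).1 hM
    have hW : (Bᴴ * A⁻¹ * B).PosSemidef := hAd.inv.posSemidef.conjTranspose_mul_mul_same B
    have h := det_le_det_add hschur hW
    rw [sub_add_cancel] at h
    exact mul_le_mul_of_nonneg_left h (psd_det_nonneg hA)

end Aux

/-- Negative dependence (Fischer's inequality): for a positive semidefinite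
marginal kernel `K` and disjoint subsets `S₁, S₂`, the joint inclusion probability
satisfies `det(K_{S₁∪S₂}) ≤ det(K_{S₁}) · det(K_{S₂})`. -/
theorem negative_dependence {n : ℕ} (K : Matrix (Fin n) (Fin n) ℝ)
    (hK : K.PosSemidef) (S₁ S₂ : Finset (Fin n)) (hdisj : Disjoint S₁ S₂) :
    (principalSubmatrix K (S₁ ∪ S₂)).det
      ≤ (principalSubmatrix K S₁).det * (principalSubmatrix K S₂).det := by
  classical
  set f : {i // i ∈ S₁} ⊕ {i // i ∈ S₂} → {i // i ∈ S₁ ∪ S₂} :=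
    Sum.elim (fun i => ⟨i, Finset.mem_union_left _ i.2⟩)
      (fun i => ⟨i, Finset.mem_union_right _ i.2⟩) with hf
  have hbij : Function.Bijective f := by
    constructor
    · rintro (a | a) (b | b) hab <;>
        simp only [hf, Sum.elim_inl, Sum.elim_inr, Subtype.mk.injEq] at hab
      · exact congrArg Sum.inl (Subtype.ext hab)
      · exact absurd b.2 (Finset.disjoint_left.mp hdisj (hab ▸ a.2))
      · exact absurd a.2 (Finset.disjoint_left.mp hdisj (hab ▸ b.2))
      · exact congrArg Sum.inr (Subtype.ext hab)
    · rintro ⟨i, hi⟩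
      by_cases h1 : i ∈ S₁
      · exact ⟨Sum.inl ⟨i, h1⟩, rfl⟩
      · have h2 : i ∈ S₂ := (Finset.mem_union.mp hi).resolve_left h1
        exact ⟨Sum.inr ⟨i, h2⟩, rfl⟩
  set e : {i // i ∈ S₁} ⊕ {i // i ∈ S₂} ≃ {i // i ∈ S₁ ∪ S₂} := Equiv.ofBijective f hbij
  set B : Matrix {i // i ∈ S₁} {i // i ∈ S₂} ℝ :=
    K.submatrix (fun i => (i : Fin n)) (fun i => (i : Fin n)) with hB
  have hBconj : Bᴴ = K.submatrix (fun i : {i // i ∈ S₂} => (i : Fin n))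
      (fun i : {i // i ∈ S₁} => (i : Fin n)) := by
    rw [hB, conjTranspose_submatrix, hK.1.eq]
  have hblocks : (principalSubmatrix K (S₁ ∪ S₂)).submatrix e e =
      fromBlocks (principalSubmatrix K S₁) B Bᴴ (principalSubmatrix K S₂) := by
    rw [hBconj]
    ext (i | i) (j | j) <;> rfl
  have hdet : (principalSubmatrix K (S₁ ∪ S₂)).det =
      (fromBlocks (principalSubmatrix K S₁) B Bᴴ (principalSubmatrix K S₂)).det := by
    rw [← hblocks, det_submatrix_equiv_self]
  have hPSD : (fromBlocks (principalSubmatrix K S₁) B Bᴴ (principalSubmatrix K S₂)).PosSemidef := by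
    rw [← hblocks]
    exact (hK.submatrix _).submatrix _
  rw [hdet]
  exact fischer_blocks hPSD
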